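/- Let E be the exterior algebra over a commutative ring R on generators e_1, ..., e_n with n ≥ 2, and let A be the quotient of E by the ideal generated by all elements ∂(e_i ∧ e_j ∧ e_k) = e_j∧e_k − e_i∧e_k + e_i∧e_j for distinct i, j, k (the rank-two Orlik–Solomon algebra of an n-point line). Let a_i denote the image of e_i, a_λ = Σ λ_i a_i and a_η = Σ η_i a_i for λ, η ∈ R^n. Then a_λ ∧ a_η = 0 in A if and only if for every k ∈ {1,...,n}, λ_{[n]} η_k − η_{[n]} λ_k = 0, where λ_{[n]} = Σ_i λ_i and η_{[n]} = Σ_i η_i. -/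

import Mathlib

open ExteriorAlgebra

/-- The degree-one generator `e_i` of the exterior algebra on `R^n`. -/
noncomputable def osGen (R : Type*) [CommRing R] {n : ℕ} (i : Fin n) :
    ExteriorAlgebra R (Fin n → R) :=
  ι R (Pi.single i (1 : R))

/-- The relation defining the rank-two Orlik–Solomon algebra of the `n`-point line:
the boundaries `∂(e_i e_j e_k) = e_j e_k − e_i e_k + e_i e_j` for distinct `i, j, k`
are set to zero. -/
def u2nRel (R : Type*) [CommRing R] (n : ℕ) :
    ExteriorAlgebra R (Fin n → R) → ExteriorAlgebra R (Fin n → R) → Prop :=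
  fun x y => y = 0 ∧ ∃ i j k : Fin n, i ≠ j ∧ i ≠ k ∧ j ≠ k ∧
    x = osGen R j * osGen R k - osGen R i * osGen R k + osGen R i * osGen R j

section aux
variable (R : Type*) [CommRing R]

/-- the `i`-th standard basis vector of `R²`. -/
def sgl (i : Fin 2) : Fin 2 → R := Pi.single i 1

variable {R}

/-- product of two degree-one elements in the exterior algebra on `R²`. -/
lemma aux_mul2 (x y : Fin 2 → R) :
    ι R x * ι R y = (x 0 * y 1 - x 1 * y 0) • (ι R (sgl R 0) * ι R (sgl R 1)) := by
  have hswap : ι R (sgl R 1) * ι R (sgl R 0) = -(ι R (sgl R 0) * ι R (sgl R 1)) :=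
    eq_neg_of_add_eq_zero_right (ι_add_mul_swap _ _)
  have hx : x = x 0 • sgl R 0 + x 1 • sgl R 1 := by
    ext i; fin_cases i <;> simp [sgl]
  have hy : y = y 0 • sgl R 0 + y 1 • sgl R 1 := by
    ext i; fin_cases i <;> simp [sgl]
  have key : ∀ a b c d : R, ι R (a • sgl R 0 + b • sgl R 1) * ι R (c • sgl R 0 + d • sgl R 1)
      = (a * d - b * c) • (ι R (sgl R 0) * ι R (sgl R 1)) := by
    intro a b c d
    simp only [map_add, map_smul, add_mul, mul_add, smul_mul_assoc, mul_smul_comm,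
      ι_sq_zero, smul_zero, zero_add, add_zero, hswap, smul_neg, smul_smul]
    module
  calc ι R x * ι R y = ι R (x 0 • sgl R 0 + x 1 • sgl R 1) *
        ι R (y 0 • sgl R 0 + y 1 • sgl R 1) := by rw [← hx, ← hy]
    _ = (x 0 * y 1 - x 1 * y 0) • (ι R (sgl R 0) * ι R (sgl R 1)) := key _ _ _ _

/-- extraction of the coefficient of `e0 ∧ e1`. -/
lemma aux_inj (r : R) (h : r • (ι R (sgl R 0) * ι R (sgl R 1)) = 0) : r = 0 := by
  classical
  set f : ∀ i, (Fin 2 → R) [⋀^Fin i]→ₗ[R] R := fun i =>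
    match i with
    | 2 => Matrix.detRowAlternating
    | _ => 0 with hf
  have := congrArg (liftAlternating (R := R) f) h
  rw [map_smul, map_zero, liftAlternating_ι_mul, liftAlternating_ι] at this
  have this2 : r • (f 2) ![sgl R 0, sgl R 1] = 0 := this
  have hdet : (f 2) ![sgl R 0, sgl R 1] = 1 := by
    show Matrix.det (Matrix.of ![sgl R 0, sgl R 1]) = 1
    rw [Matrix.det_fin_two]
    simp [sgl]
  rw [hdet, smul_eq_mul, mul_one] at this2
  exact this2

end aux

section main
variable {R : Type*} [CommRing R] {n : ℕ}

/-- the linear map `v ↦ (∑ v i, v k)`. -/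
def Lmap (R : Type*) [CommRing R] {n : ℕ} (k : Fin n) : (Fin n → R) →ₗ[R] (Fin 2 → R) where
  toFun v := (∑ i, v i) • sgl R 0 + v k • sgl R 1
  map_add' u v := by
    simp only [Pi.add_apply, Finset.sum_add_distrib, add_smul]
    abel
  map_smul' r v := by
    simp only [Pi.smul_apply, smul_eq_mul, ← Finset.mul_sum, RingHom.id_apply, smul_add,
      smul_smul]

lemma Lmap_apply_zero (k : Fin n) (v : Fin n → R) : Lmap R k v 0 = ∑ i, v i := by
  simp [Lmap, sgl]

lemma Lmap_apply_one (k : Fin n) (v : Fin n → R) : Lmap R k v 1 = v k := by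
  simp [Lmap, sgl]

/-- the algebra map detecting the coefficient `λ_{[n]} η_k − η_{[n]} λ_k`. -/
noncomputable def psiMap (R : Type*) [CommRing R] {n : ℕ} (k : Fin n) :
    ExteriorAlgebra R (Fin n → R) →ₐ[R] ExteriorAlgebra R (Fin 2 → R) :=
  ExteriorAlgebra.lift R ⟨(ι R).comp (Lmap R k), fun m => by simp [ι_sq_zero]⟩

lemma psiMap_ι (k : Fin n) (v : Fin n → R) : psiMap R k (ι R v) = ι R (Lmap R k v) := by
  simp [psiMap]

lemma psiMap_mul_ι (k : Fin n) (u v : Fin n → R) :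
    psiMap R k (ι R u * ι R v) =
      ((∑ i, u i) * v k - u k * ∑ i, v i) • (ι R (sgl R 0) * ι R (sgl R 1)) := by
  rw [map_mul, psiMap_ι, psiMap_ι, aux_mul2, Lmap_apply_zero, Lmap_apply_one,
    Lmap_apply_zero, Lmap_apply_one]

lemma psiMap_rel (k : Fin n) : ∀ ⦃x y : ExteriorAlgebra R (Fin n → R)⦄,
    u2nRel R n x y → psiMap R k x = psiMap R k y := by
  rintro x y ⟨rfl, i, j, m, hij, him, hjm, rfl⟩
  rw [map_zero, map_add, map_sub]
  simp only [osGen, psiMap_mul_ι]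
  have hs : ∀ a : Fin n, (∑ i', Pi.single a (1 : R) i') = 1 := by
    intro a; simp [Finset.sum_pi_single']
  rw [hs, hs, hs]
  module

end main

/-- In the rank-two Orlik–Solomon algebra `A = E/I` on `n ≥ 2` generators over a
commutative ring `R`, `a_λ ∧ a_η = 0` iff `λ_{[n]} η_k − η_{[n]} λ_k = 0` for all `k`. -/
theorem stmt_5 {R : Type*} [CommRing R] {n : ℕ} (hn : 2 ≤ n) (l η : Fin n → R) :
    RingQuot.mkRingHom (u2nRel R n) (ι R l * ι R η) = 0 ↔
      ∀ k : Fin n, (∑ i, l i) * η k - (∑ i, η i) * l k = 0 := by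
  constructor
  · intro h k
    have h0 : psiMap R k (ι R l * ι R η) = 0 := by
      have := RingQuot.lift_mkRingHom_apply (psiMap R k).toRingHom (psiMap_rel k)
        (ι R l * ι R η)
      rw [h, map_zero] at this
      exact this.symm
    rw [psiMap_mul_ι] at h0
    have := aux_inj _ h0
    linear_combination this
  · intro h
    have hcoe : ∀ x, RingQuot.mkRingHom (u2nRel R n) x =
        RingQuot.mkAlgHom R (u2nRel R n) x := fun x => by
      rw [← RingQuot.mkAlgHom_coe R (u2nRel R n)]; rfl
    rw [hcoe]
    set Φ := RingQuot.mkAlgHom R (u2nRel R n) with hΦ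
    set b : Fin n → RingQuot (u2nRel R n) := fun i => Φ (osGen R i) with hb
    have i0 : Fin n := ⟨0, by omega⟩
    have hsq : ∀ i, b i * b i = 0 := by
      intro i
      rw [hb, ← map_mul, osGen, ι_sq_zero, map_zero]
    have hswap : ∀ i j, b i * b j = -(b j * b i) := by
      intro i j
      have : b i * b j + b j * b i = 0 := by
        rw [hb, ← map_mul, ← map_mul, ← map_add, osGen, osGen, ι_add_mul_swap, map_zero]
      exact eq_neg_of_add_eq_zero_left this
    have hrel0 : ∀ i j : Fin n, i0 ≠ i → i0 ≠ j → i ≠ j →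
        b i * b j - b i0 * b j + b i0 * b i = 0 := by
      intro i j h1 h2 h3
      have hr : u2nRel R n
          (osGen R i * osGen R j - osGen R i0 * osGen R j + osGen R i0 * osGen R i) 0 :=
        ⟨rfl, i0, i, j, h1, h2, h3, rfl⟩
      have h5 := RingQuot.mkRingHom_rel hr
      rw [map_zero, hcoe, map_add, map_sub, map_mul, map_mul, map_mul] at h5
      exact h5
    have hbij : ∀ i j, b i * b j = b i0 * b j - b i0 * b i := by
      intro i j
      rcases eq_or_ne i j with rfl | hij
      · rw [hsq, sub_self]
      rcases eq_or_ne i0 i with rfl | h1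
      · rw [hsq, sub_zero]
      rcases eq_or_ne i0 j with rfl | h2
      · rw [hsq, zero_sub, hswap]
      · have h6 := hrel0 i j h1 h2 hij
        calc b i * b j
            = (b i * b j - b i0 * b j + b i0 * b i) + (b i0 * b j - b i0 * b i) := by abel
          _ = b i0 * b j - b i0 * b i := by rw [h6, zero_add]
    have hl : ∀ v : Fin n → R, Φ (ι R v) = ∑ i, v i • b i := by
      intro v
      have hv : v = ∑ i, v i • (Pi.single i (1 : R) : Fin n → R) := by
        ext j
        rw [Finset.sum_apply]
        simp [Pi.single_apply]
      conv_lhs => rw [hv]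
      rw [map_sum, map_sum]
      exact Finset.sum_congr rfl fun i _ => by rw [map_smul, map_smul]; simp only [hb]; rw [osGen]
    rw [map_mul, hl, hl, Finset.sum_mul_sum]
    have key : ∀ i j, (l i • b i) * (η j • b j) = (l i * η j) • (b i0 * b j)
        - (l i * η j) • (b i0 * b i) := by
      intro i j
      rw [smul_mul_smul_comm, hbij, smul_sub]
    calc ∑ i, ∑ j, (l i • b i) * (η j • b j)
        = ∑ i, ∑ j, ((l i * η j) • (b i0 * b j) - (l i * η j) • (b i0 * b i)) := by
          exact Finset.sum_congr rfl fun i _ => Finset.sum_congr rfl fun j _ => key i j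
      _ = (∑ i, ∑ j, (l i * η j) • (b i0 * b j)) -
            ∑ i, ∑ j, (l i * η j) • (b i0 * b i) := by
          rw [← Finset.sum_sub_distrib]
          exact Finset.sum_congr rfl fun i _ => Finset.sum_sub_distrib _ _
      _ = (∑ j, ((∑ i, l i) * η j) • (b i0 * b j)) -
            ∑ i, (l i * ∑ j, η j) • (b i0 * b i) := by
          congr 1
          · rw [Finset.sum_comm]
            exact Finset.sum_congr rfl fun j _ => by
              rw [← Finset.sum_smul, ← Finset.sum_mul]
          · exact Finset.sum_congr rfl fun i _ => by
              rw [← Finset.sum_smul, ← Finset.mul_sum]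
      _ = ∑ k, ((∑ i, l i) * η k - l k * ∑ j, η j) • (b i0 * b k) := by
          rw [← Finset.sum_sub_distrib]
          exact Finset.sum_congr rfl fun k _ => (sub_smul _ _ _).symm
      _ = 0 := by
          apply Finset.sum_eq_zero
          intro k _
          have : (∑ i, l i) * η k - l k * ∑ j, η j = 0 := by
            linear_combination h k
          rw [this, zero_smul]
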